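/- With T* as above, for all mean vectors μ and μ' with T*(μ'), T*(μ) finite and positive, ln T*(μ') - ln T*(μ) ≤ √(2 T*(μ')/σ²)·‖μ - μ'‖_∞. -/

import Mathlib

/-- `Tinv K σ2 Alt μ = (T*(μ))⁻¹ = sup_{w ∈ Δ_K} inf_{λ ∈ Alt μ} Σ_i w_i (μ_i - λ_i)²/(2σ²)`. -/
noncomputable def Tinv (K : ℕ) (σ2 : ℝ) (Alt : (Fin K → ℝ) → Set (Fin K → ℝ))
    (μ : Fin K → ℝ) : ℝ :=
  sSup {x | ∃ w ∈ stdSimplex ℝ (Fin K), x =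
    sInf {y | ∃ l ∈ Alt μ, y = ∑ i, w i * (μ i - l i) ^ 2 / (2 * σ2)}}

lemma tri_aux (K : ℕ) (w μ μ' l : Fin K → ℝ) (hw : ∀ i, 0 ≤ w i) (hw1 : ∑ i, w i = 1) :
    Real.sqrt (∑ i, w i * (μ i - l i)^2) ≤ Real.sqrt (∑ i, w i * (μ' i - l i)^2) + ‖μ - μ'‖ := by
  set u : EuclideanSpace ℝ (Fin K) := WithLp.toLp 2 fun i => Real.sqrt (w i) * (μ' i - l i) with hu
  set v : EuclideanSpace ℝ (Fin K) := WithLp.toLp 2 fun i => Real.sqrt (w i) * (μ i - μ' i) with hv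
  have hnorm : ∀ (x : EuclideanSpace ℝ (Fin K)), ‖x‖ = Real.sqrt (∑ i, (x i)^2) := by
    intro x
    rw [EuclideanSpace.norm_eq]
    congr 1
    exact Finset.sum_congr rfl fun i _ => by rw [Real.norm_eq_abs, sq_abs]
  have hsum : ∀ (a : Fin K → ℝ), ∑ i, w i * (a i)^2 = ∑ i, (Real.sqrt (w i) * a i)^2 :=
    fun a => Finset.sum_congr rfl fun i _ => by rw [mul_pow, Real.sq_sqrt (hw i)]
  have h1 : Real.sqrt (∑ i, w i * (μ i - l i)^2) = ‖u + v‖ := by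
    rw [hnorm, hsum]
    congr 1
    refine Finset.sum_congr rfl fun i _ => ?_
    have : (u + v) i = Real.sqrt (w i) * (μ' i - l i) + Real.sqrt (w i) * (μ i - μ' i) := rfl
    rw [this]; ring_nf
  have h2 : Real.sqrt (∑ i, w i * (μ' i - l i)^2) = ‖u‖ := by
    rw [hnorm, hsum]
  have h3 : ‖v‖ ≤ ‖μ - μ'‖ := by
    rw [hnorm]
    have : ∑ i, (v i)^2 ≤ ‖μ - μ'‖^2 := by
      calc ∑ i, (v i)^2 ≤ ∑ i, w i * ‖μ - μ'‖^2 := by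
            refine Finset.sum_le_sum fun i _ => ?_
            have hvi : (v i)^2 = w i * (μ i - μ' i)^2 := by
              rw [hv]; rw [mul_pow, Real.sq_sqrt (hw i)]
            rw [hvi]
            have habs : |μ i - μ' i| ≤ ‖μ - μ'‖ := by
              have := norm_le_pi_norm (μ - μ') i
              simpa [Real.norm_eq_abs] using this
            have : (μ i - μ' i)^2 ≤ ‖μ - μ'‖^2 := by
              rw [← sq_abs]; exact pow_le_pow_left₀ (abs_nonneg _) habs 2
            exact mul_le_mul_of_nonneg_left this (hw i)
        _ = ‖μ - μ'‖^2 := by rw [← Finset.sum_mul, hw1, one_mul]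
    calc Real.sqrt (∑ i, (v i)^2) ≤ Real.sqrt (‖μ - μ'‖^2) := Real.sqrt_le_sqrt this
      _ = ‖μ - μ'‖ := Real.sqrt_sq (norm_nonneg _)
  calc Real.sqrt (∑ i, w i * (μ i - l i)^2) = ‖u + v‖ := h1
    _ ≤ ‖u‖ + ‖v‖ := norm_add_le _ _
    _ ≤ Real.sqrt (∑ i, w i * (μ' i - l i)^2) + ‖μ - μ'‖ := by rw [h2]; exact add_le_add_right h3 _


/-- For `T*(μ), T*(μ')` finite positive,
`ln T*(μ') - ln T*(μ) ≤ √(2 T*(μ')/σ²) ‖μ - μ'‖_∞`. -/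
theorem stmt_7 (K : ℕ) (σ2 : ℝ) (hσ2 : 0 < σ2)
    (Alt : (Fin K → ℝ) → Set (Fin K → ℝ))
    (hAlt : ∀ μ μ' : Fin K → ℝ, Alt μ = Alt μ' ∨ μ' ∈ Alt μ)
    (μ μ' : Fin K → ℝ) (h1 : (Alt μ).Nonempty) (h2 : (Alt μ').Nonempty)
    (hpos : 0 < Tinv K σ2 Alt μ) (hpos' : 0 < Tinv K σ2 Alt μ') :
    Real.log (Tinv K σ2 Alt μ')⁻¹ - Real.log (Tinv K σ2 Alt μ)⁻¹ ≤
      Real.sqrt (2 * (Tinv K σ2 Alt μ')⁻¹ / σ2) * ‖μ - μ'‖ := by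
  have h2σ : (0:ℝ) < 2 * σ2 := by linarith
  have hs2σ : (0:ℝ) < Real.sqrt (2*σ2) := Real.sqrt_pos.2 h2σ
  set d : ℝ := ‖μ - μ'‖ / Real.sqrt (2*σ2) with hd
  have hd0 : 0 ≤ d := div_nonneg (norm_nonneg _) hs2σ.le
  set I : (Fin K → ℝ) → (Fin K → ℝ) → Set ℝ :=
    fun ν w => {y | ∃ l ∈ Alt ν, y = ∑ i, w i * (ν i - l i)^2 / (2*σ2)} with hI
  set S : (Fin K → ℝ) → Set ℝ :=
    fun ν => {x | ∃ w ∈ stdSimplex ℝ (Fin K), x = sInf (I ν w)} with hS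
  have hTS : ∀ ν, Tinv K σ2 Alt ν = sSup (S ν) := fun ν => rfl
  -- nonनegativity of elements
  have hInn : ∀ ν w, w ∈ stdSimplex ℝ (Fin K) → ∀ y ∈ I ν w, (0:ℝ) ≤ y := by
    rintro ν w hw y ⟨l, _, rfl⟩
    exact Finset.sum_nonneg fun i _ => div_nonneg (mul_nonneg (hw.1 i) (sq_nonneg _)) h2σ.le
  have hIbdd : ∀ ν w, w ∈ stdSimplex ℝ (Fin K) → BddBelow (I ν w) :=
    fun ν w hw => ⟨0, fun y hy => hInn ν w hw y hy⟩
  have hIne : ∀ ν w, (Alt ν).Nonempty → (I ν w).Nonempty := by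
    rintro ν w ⟨l, hl⟩; exact ⟨_, l, hl, rfl⟩
  have hInf0 : ∀ ν w, w ∈ stdSimplex ℝ (Fin K) → (Alt ν).Nonempty → 0 ≤ sInf (I ν w) :=
    fun ν w hw hne => le_csInf (hIne ν w hne) (hInn ν w hw)
  -- boundedness above of S μ'
  obtain ⟨l0, hl0⟩ := h2
  have hSbdd : BddAbove (S μ') := by
    refine ⟨∑ i, (μ' i - l0 i)^2 / (2*σ2), ?_⟩
    rintro x ⟨w, hw, rfl⟩
    refine le_trans (csInf_le (hIbdd μ' w hw) ⟨l0, hl0, rfl⟩) ?_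
    refine Finset.sum_le_sum fun i _ => ?_
    have hwi1 : w i ≤ 1 := hw.2 ▸ Finset.single_le_sum (fun j _ => hw.1 j) (Finset.mem_univ i)
    have : w i * (μ' i - l0 i)^2 ≤ (μ' i - l0 i)^2 := by nlinarith [sq_nonneg (μ' i - l0 i)]
    exact (div_le_div_iff_of_pos_right h2σ).mpr this
  have hsT'0 : 0 < Real.sqrt (Tinv K σ2 Alt μ') := Real.sqrt_pos.2 hpos'
  have hsT0 : 0 < Real.sqrt (Tinv K σ2 Alt μ) := Real.sqrt_pos.2 hpos
  have hSne : (S μ).Nonempty := by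
    by_contra hne
    rw [Set.not_nonempty_iff_eq_empty] at hne
    rw [hTS μ, hne, Real.sSup_empty] at hpos
    exact lt_irrefl 0 hpos
  have htri : ∀ w, w ∈ stdSimplex ℝ (Fin K) → ∀ l : Fin K → ℝ,
      Real.sqrt (∑ i, w i * (μ i - l i)^2 / (2*σ2)) ≤
        Real.sqrt (∑ i, w i * (μ' i - l i)^2 / (2*σ2)) + d := by
    intro w hw l
    have e1 : ∀ ν : Fin K → ℝ, (∑ i, w i * (ν i - l i)^2 / (2*σ2))
        = (∑ i, w i * (ν i - l i)^2) / (2*σ2) := fun ν => (Finset.sum_div _ _ _).symm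
    rw [e1 μ, e1 μ',
      Real.sqrt_div (Finset.sum_nonneg fun i _ => mul_nonneg (hw.1 i) (sq_nonneg _)) _,
      Real.sqrt_div (Finset.sum_nonneg fun i _ => mul_nonneg (hw.1 i) (sq_nonneg _)) _, hd,
      ← add_div]
    exact (div_le_div_iff_of_pos_right hs2σ).mpr (tri_aux K w μ μ' l hw.1 hw.2)
  have hub : ∀ x ∈ S μ, x ≤ (Real.sqrt (Tinv K σ2 Alt μ') + d)^2 := by
    rintro x ⟨w, hw, rfl⟩
    have hx0 : 0 ≤ sInf (I μ w) := hInf0 μ w hw h1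
    have hsT : 0 ≤ Real.sqrt (Tinv K σ2 Alt μ') := Real.sqrt_nonneg _
    rcases hAlt μ μ' with heq | hmem
    · have hs'0 : 0 ≤ sInf (I μ' w) := hInf0 μ' w hw ⟨l0, hl0⟩
      have hkey : Real.sqrt (sInf (I μ w)) ≤ Real.sqrt (sInf (I μ' w)) + d := by
        by_cases hc : Real.sqrt (sInf (I μ w)) ≤ d
        · linarith [Real.sqrt_nonneg (sInf (I μ' w))]
        · push_neg at hc
          set c := Real.sqrt (sInf (I μ w)) - d with hcdef
          have hc0 : 0 < c := by rw [hcdef]; linarith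
          have hcy : ∀ y ∈ I μ' w, c^2 ≤ y := by
            rintro y ⟨l, hl, rfl⟩
            have hlμ : l ∈ Alt μ := heq ▸ hl
            have hx_le : sInf (I μ w) ≤ ∑ i, w i * (μ i - l i)^2/(2*σ2) :=
              csInf_le (hIbdd μ w hw) ⟨l, hlμ, rfl⟩
            have h4 : Real.sqrt (sInf (I μ w)) ≤
                Real.sqrt (∑ i, w i * (μ' i - l i)^2/(2*σ2)) + d :=
              le_trans (Real.sqrt_le_sqrt hx_le) (htri w hw l)
            have h5 : c ≤ Real.sqrt (∑ i, w i * (μ' i - l i)^2/(2*σ2)) := by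
              rw [hcdef]; linarith
            have hy0 : 0 ≤ ∑ i, w i * (μ' i - l i)^2/(2*σ2) := hInn μ' w hw _ ⟨l, hl, rfl⟩
            exact (Real.le_sqrt hc0.le hy0).mp h5
          have hcs : c^2 ≤ sInf (I μ' w) := le_csInf (hIne μ' w ⟨l0, hl0⟩) hcy
          have hfin : c ≤ Real.sqrt (sInf (I μ' w)) := (Real.le_sqrt hc0.le hs'0).mpr hcs
          rw [hcdef] at hfin; linarith
      have hs'T : sInf (I μ' w) ≤ Tinv K σ2 Alt μ' := by
        rw [hTS μ']; exact le_csSup hSbdd ⟨w, hw, rfl⟩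
      calc sInf (I μ w) = (Real.sqrt (sInf (I μ w)))^2 := (Real.sq_sqrt hx0).symm
        _ ≤ (Real.sqrt (sInf (I μ' w)) + d)^2 := by
            have h7 : 0 ≤ Real.sqrt (sInf (I μ' w)) + d := by positivity
            exact pow_le_pow_left₀ (Real.sqrt_nonneg _) hkey 2
        _ ≤ (Real.sqrt (Tinv K σ2 Alt μ') + d)^2 := by
            have h8 := Real.sqrt_le_sqrt hs'T
            nlinarith [Real.sqrt_nonneg (sInf (I μ' w))]
    · have hle : sInf (I μ w) ≤ ∑ i, w i * (μ i - μ' i)^2/(2*σ2) :=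
        csInf_le (hIbdd μ w hw) ⟨μ', hmem, rfl⟩
      have hbd : ∑ i, w i * (μ i - μ' i)^2/(2*σ2) ≤ d^2 := by
        have hd2 : d^2 = ‖μ - μ'‖^2 / (2*σ2) := by
          rw [hd, div_pow, Real.sq_sqrt h2σ.le]
        rw [hd2]
        calc ∑ i, w i * (μ i - μ' i)^2/(2*σ2) ≤ ∑ i, w i * ‖μ - μ'‖^2/(2*σ2) := by
              refine Finset.sum_le_sum fun i _ => ?_
              have habs : |μ i - μ' i| ≤ ‖μ - μ'‖ := by
                have := norm_le_pi_norm (μ - μ') i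
                simpa [Real.norm_eq_abs] using this
              have h6 : (μ i - μ' i)^2 ≤ ‖μ - μ'‖^2 := by
                rw [← sq_abs]; exact pow_le_pow_left₀ (abs_nonneg _) habs 2
              exact (div_le_div_iff_of_pos_right h2σ).mpr (mul_le_mul_of_nonneg_left h6 (hw.1 i))
          _ = ‖μ - μ'‖^2/(2*σ2) := by
              rw [← Finset.sum_div, ← Finset.sum_mul, hw.2, one_mul]
      nlinarith [Real.sqrt_nonneg (Tinv K σ2 Alt μ')]
  have hkey2 : Real.sqrt (Tinv K σ2 Alt μ) ≤ Real.sqrt (Tinv K σ2 Alt μ') + d := by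
    have hTle : Tinv K σ2 Alt μ ≤ (Real.sqrt (Tinv K σ2 Alt μ') + d)^2 := by
      rw [hTS μ]; exact csSup_le hSne hub
    have h9 := Real.sqrt_le_sqrt hTle
    rwa [Real.sqrt_sq (by positivity)] at h9
  have hlog : Real.log (Tinv K σ2 Alt μ')⁻¹ - Real.log (Tinv K σ2 Alt μ)⁻¹
      = 2 * (Real.log (Real.sqrt (Tinv K σ2 Alt μ)) - Real.log (Real.sqrt (Tinv K σ2 Alt μ'))) := by
    rw [Real.log_inv, Real.log_inv, Real.log_sqrt hpos.le, Real.log_sqrt hpos'.le]; ring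
  have hlb : Real.log (Real.sqrt (Tinv K σ2 Alt μ)) - Real.log (Real.sqrt (Tinv K σ2 Alt μ'))
      ≤ d / Real.sqrt (Tinv K σ2 Alt μ') := by
    rw [← Real.log_div hsT0.ne' hsT'0.ne']
    refine le_trans (Real.log_le_sub_one_of_pos (div_pos hsT0 hsT'0)) ?_
    rw [div_sub_one hsT'0.ne']
    exact (div_le_div_iff_of_pos_right hsT'0).mpr (by linarith)
  have hrhs : Real.sqrt (2 * (Tinv K σ2 Alt μ')⁻¹ / σ2) * ‖μ - μ'‖
      = 2 * (d / Real.sqrt (Tinv K σ2 Alt μ')) := by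
    have he : 2 * (Tinv K σ2 Alt μ')⁻¹ / σ2
        = (2 / (Real.sqrt (2*σ2) * Real.sqrt (Tinv K σ2 Alt μ')))^2 := by
      rw [div_pow, mul_pow, Real.sq_sqrt h2σ.le, Real.sq_sqrt hpos'.le]
      field_simp
    rw [he, Real.sqrt_sq (by positivity), hd]
    field_simp
  rw [hlog, hrhs]
  linarith
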